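/- For λ ∈ ℝ, every nonnegative integer n, and every real x, the degenerate Bell polynomial satisfies Bel_{n,λ}(x) = e^{−x} Σ_{k=0}^{∞} (1/k!) (k|λ)_n x^k, where the series converges absolutely. -/

import Mathlib

open Finset

/-- The degenerate falling factorial `(x|λ)_n = x(x-λ)(x-2λ)⋯(x-(n-1)λ)`. -/
noncomputable def degFall (x lam : ℝ) (n : ℕ) : ℝ := ∏ i ∈ Finset.range n, (x - i * lam)

/-- The formal power series `(1+λt)^{y/λ} = Σ_{m=0}^∞ (y|λ)_m t^m/m!`. -/
noncomputable def degExp (lam y : ℝ) : PowerSeries ℝ :=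
  PowerSeries.mk fun m => degFall y lam m / m.factorial

/-- The degenerate Stirling numbers of the second kind `S_{2,λ}(n,k)`, defined by
`(1/k!)((1+λt)^{1/λ} - 1)^k = Σ_{n=k}^∞ S_{2,λ}(n,k) t^n/n!`. -/
noncomputable def degStirling2 (lam : ℝ) (n k : ℕ) : ℝ :=
  (n.factorial : ℝ) *
    PowerSeries.coeff n (((k.factorial : ℝ))⁻¹ • (degExp lam 1 - 1) ^ k)

/-- The extended degenerate Stirling numbers of the second kind `S_{2,r}(n+r,k+r|λ)`,
defined by `(1/k!)(1+λt)^{r/λ}((1+λt)^{1/λ} - 1)^k = Σ_{n=k}^∞ S_{2,r}(n+r,k+r|λ) t^n/n!`. -/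
noncomputable def extDegStirling2 (lam : ℝ) (r n k : ℕ) : ℝ :=
  (n.factorial : ℝ) *
    PowerSeries.coeff n
      (((k.factorial : ℝ))⁻¹ • (degExp lam r * (degExp lam 1 - 1) ^ k))

/-- The exponential `e^f = Σ_{k=0}^∞ f^k / k!` of a formal power series, computed
coefficientwise (the coefficientwise sums converge when `f` has zero constant term). -/
noncomputable def expComp (f : PowerSeries ℝ) : PowerSeries ℝ :=
  PowerSeries.mk fun n => ∑' k : ℕ, PowerSeries.coeff n (f ^ k) / k.factorial

/-- The degenerate Bell polynomials, defined by
`e^{x((1+λt)^{1/λ} - 1)} = Σ_{n=0}^∞ Bel_{n,λ}(x) t^n/n!`. -/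
noncomputable def degBell (lam x : ℝ) (n : ℕ) : ℝ :=
  (n.factorial : ℝ) * PowerSeries.coeff n (expComp (x • (degExp lam 1 - 1)))

/-- The extended degenerate Bell polynomials, defined by
`(1+λt)^{r/λ} e^{x((1+λt)^{1/λ} - 1)} = Σ_{n=0}^∞ Bel^{(r)}_{n,λ}(x) t^n/n!`. -/
noncomputable def extDegBell (lam : ℝ) (r : ℕ) (x : ℝ) (n : ℕ) : ℝ :=
  (n.factorial : ℝ) *
    PowerSeries.coeff n (degExp lam r * expComp (x • (degExp lam 1 - 1)))

/-- The signed Stirling numbers of the first kind `S_1(n,k)`, defined by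
`(x)_n = x(x-1)⋯(x-n+1) = Σ_{k=0}^n S_1(n,k) x^k`. -/
noncomputable def stirling1 (n k : ℕ) : ℝ :=
  (∏ i ∈ Finset.range n, (Polynomial.X - Polynomial.C (i : ℝ))).coeff k

/-- The Stirling numbers of the second kind, defined by
`(1/k!)(e^t - 1)^k = Σ_{n=k}^∞ S_2(n,k) t^n/n!`. -/
noncomputable def stirling2 (n k : ℕ) : ℝ :=
  (n.factorial : ℝ) *
    PowerSeries.coeff n (((k.factorial : ℝ))⁻¹ • (PowerSeries.exp ℝ - 1) ^ k)

/-- The r-Stirling numbers of the second kind `S_{2,r}(n+r,k+r)`, defined by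
`e^{rt}(1/k!)(e^t - 1)^k = Σ_{n=0}^∞ S_{2,r}(n+r,k+r) t^n/n!`. -/
noncomputable def rStirling2 (r n k : ℕ) : ℝ :=
  (n.factorial : ℝ) *
    PowerSeries.coeff n
      (PowerSeries.rescale (r : ℝ) (PowerSeries.exp ℝ) *
        ((k.factorial : ℝ))⁻¹ • (PowerSeries.exp ℝ - 1) ^ k)

/-- The ordinary falling factorial `(x)_k = x(x-1)⋯(x-k+1)`. -/
noncomputable def fallFact (x : ℝ) (k : ℕ) : ℝ := ∏ i ∈ Finset.range k, (x - i)

lemma degFall_succ (x lam : ℝ) (n : ℕ) :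
    degFall x lam (n + 1) = degFall x lam n * (x - n * lam) := Finset.prod_range_succ _ _

lemma degFall_zero (x lam : ℝ) : degFall x lam 0 = 1 := rfl

lemma degFall_vandermonde (lam a b : ℝ) (n : ℕ) :
    degFall (a + b) lam n =
      ∑ j ∈ range (n + 1), (n.choose j : ℝ) * degFall a lam j * degFall b lam (n - j) := by
  induction n with
  | zero => simp [degFall]
  | succ n ih =>
    rw [degFall_succ, ih, Finset.sum_mul]
    have key : ∀ j ∈ range (n + 1),
        (n.choose j : ℝ) * degFall a lam j * degFall b lam (n - j) * (a + b - n * lam)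
        = (n.choose j : ℝ) * degFall a lam (j + 1) * degFall b lam (n - j)
          + (n.choose j : ℝ) * degFall a lam j * degFall b lam (n - j + 1) := by
      intro j hj
      have hj' : j ≤ n := Nat.lt_succ_iff.mp (mem_range.mp hj)
      have hsplit : (a + b - n * lam) = (a - j * lam) + (b - ((n - j : ℕ) : ℝ) * lam) := by
        rw [Nat.cast_sub hj']; ring
      rw [hsplit, degFall_succ, degFall_succ]; ring
    rw [Finset.sum_congr rfl key, Finset.sum_add_distrib]
    -- target RHS manipulation
    have hT : ∑ j ∈ range (n + 2), (((n+1).choose j : ℝ)) * degFall a lam j * degFall b lam (n + 1 - j)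
        = (∑ j ∈ range (n + 1), (n.choose j : ℝ) * degFall a lam (j + 1) * degFall b lam (n - j))
          + ∑ j ∈ range (n + 1), (n.choose j : ℝ) * degFall a lam j * degFall b lam (n + 1 - j) := by
      rw [Finset.sum_range_succ' (fun j => (((n+1).choose j : ℝ)) * degFall a lam j * degFall b lam (n + 1 - j)) (n + 1)]
      have h1 : ∀ j ∈ range (n + 1),
          (((n+1).choose (j+1) : ℝ)) * degFall a lam (j+1) * degFall b lam (n + 1 - (j+1))
          = (n.choose j : ℝ) * degFall a lam (j + 1) * degFall b lam (n - j)
            + (n.choose (j+1) : ℝ) * degFall a lam (j+1) * degFall b lam (n - j) := by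
        intro j hj
        have : ((n+1).choose (j+1) : ℝ) = (n.choose j : ℝ) + (n.choose (j+1) : ℝ) := by
          rw [Nat.choose_succ_succ]; push_cast; ring
        rw [Nat.succ_sub_succ, this]; ring
      rw [Finset.sum_congr rfl h1, Finset.sum_add_distrib]
      have h2 : ∑ j ∈ range (n + 1), (n.choose (j+1) : ℝ) * degFall a lam (j+1) * degFall b lam (n - j)
            + (((n+1).choose 0 : ℝ)) * degFall a lam 0 * degFall b lam (n + 1 - 0)
          = ∑ j ∈ range (n + 2), (n.choose j : ℝ) * degFall a lam j * degFall b lam (n + 1 - j) := by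
        rw [Finset.sum_range_succ' (fun j => (n.choose j : ℝ) * degFall a lam j * degFall b lam (n + 1 - j)) (n + 1)]
        congr 1
        · apply Finset.sum_congr rfl
          intro j hj
          rw [Nat.succ_sub_succ]
        · simp
      have h3 : ∑ j ∈ range (n + 2), (n.choose j : ℝ) * degFall a lam j * degFall b lam (n + 1 - j)
          = ∑ j ∈ range (n + 1), (n.choose j : ℝ) * degFall a lam j * degFall b lam (n + 1 - j) := by
        rw [Finset.sum_range_succ]
        simp [Nat.choose_succ_self]
      rw [add_assoc, h2, h3]
    rw [hT]
    congr 1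
    apply Finset.sum_congr rfl
    intro j hj
    have hj' : j ≤ n := Nat.lt_succ_iff.mp (mem_range.mp hj)
    rw [Nat.sub_add_comm hj']

lemma degExp_coeff (lam y : ℝ) (n : ℕ) :
    PowerSeries.coeff n (degExp lam y) = degFall y lam n / n.factorial := by
  simp [degExp]

lemma degExp_zero (lam : ℝ) : degExp lam 0 = 1 := by
  ext n
  cases n with
  | zero => simp [degExp, degFall]
  | succ m =>
    rw [degExp_coeff]
    have : degFall 0 lam (m + 1) = 0 := by
      apply Finset.prod_eq_zero (Finset.mem_range.mpr (Nat.succ_pos m))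
      simp
    simp [this]

lemma degExp_add (lam a b : ℝ) : degExp lam (a + b) = degExp lam a * degExp lam b := by
  ext n
  rw [degExp_coeff, PowerSeries.coeff_mul,
    Finset.Nat.sum_antidiagonal_eq_sum_range_succ_mk, degFall_vandermonde,
    Finset.sum_div]
  apply Finset.sum_congr rfl
  intro j hj
  have hj' : j ≤ n := Nat.lt_succ_iff.mp (mem_range.mp hj)
  rw [degExp_coeff, degExp_coeff]
  have hfact : ((n.choose j : ℕ) : ℝ) * (j.factorial : ℝ) * ((n - j).factorial : ℝ)
      = (n.factorial : ℝ) := by exact_mod_cast Nat.choose_mul_factorial_mul_factorial hj'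
  have h1 : (j.factorial : ℝ) ≠ 0 := Nat.cast_ne_zero.mpr j.factorial_ne_zero
  have h2 : (((n - j).factorial : ℕ) : ℝ) ≠ 0 := Nat.cast_ne_zero.mpr (n - j).factorial_ne_zero
  have h3 : ((n.factorial : ℕ) : ℝ) ≠ 0 := Nat.cast_ne_zero.mpr n.factorial_ne_zero
  field_simp
  linear_combination (degFall a lam j * degFall b lam (n - j)) * hfact

lemma degExp_one_pow (lam : ℝ) (k : ℕ) : (degExp lam 1) ^ k = degExp lam k := by
  induction k with
  | zero => rw [pow_zero, Nat.cast_zero, degExp_zero]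
  | succ k ih =>
    rw [pow_succ, ih, ← degExp_add, Nat.cast_succ]

lemma coeff_sub_one_pow_eq_zero (lam : ℝ) {n k : ℕ} (h : n < k) :
    PowerSeries.coeff n ((degExp lam 1 - 1) ^ k) = 0 := by
  have hX : PowerSeries.X ∣ (degExp lam 1 - 1) := by
    rw [PowerSeries.X_dvd_iff]
    simp [degExp, PowerSeries.constantCoeff_mk, degFall]
  obtain ⟨c, hc⟩ := pow_dvd_pow_of_dvd hX k
  rw [hc, mul_comm, PowerSeries.coeff_mul_X_pow', if_neg (not_le.mpr h)]

lemma degFall_nat_eq (lam : ℝ) (n k : ℕ) :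
    degFall (k : ℝ) lam n = (n.factorial : ℝ) *
      ∑ j ∈ range (n + 1), (k.choose j : ℝ) *
        PowerSeries.coeff n ((degExp lam 1 - 1) ^ j) := by
  have hg : degExp lam (k : ℝ) = (1 + (degExp lam 1 - 1)) ^ k := by
    rw [add_sub_cancel, degExp_one_pow]
  have h1 : degFall (k : ℝ) lam n / (n.factorial : ℝ)
      = ∑ j ∈ range (k + 1), (k.choose j : ℝ) *
          PowerSeries.coeff n ((degExp lam 1 - 1) ^ j) := by
    rw [← degExp_coeff, hg, add_comm, add_pow]
    rw [map_sum]
    apply Finset.sum_congr rfl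
    intro j hj
    rw [one_pow, mul_one]
    have hc : ((k.choose j : ℕ) : PowerSeries ℝ) = PowerSeries.C ((k.choose j : ℕ) : ℝ) :=
      (map_natCast (PowerSeries.C) (k.choose j)).symm
    rw [hc, PowerSeries.coeff_mul_C, mul_comm]
  -- now adjust ranges: sum over range (k+1) equals sum over range (n+1)
  have h2 : ∑ j ∈ range (k + 1), (k.choose j : ℝ) *
        PowerSeries.coeff n ((degExp lam 1 - 1) ^ j)
      = ∑ j ∈ range (n + 1), (k.choose j : ℝ) *
        PowerSeries.coeff n ((degExp lam 1 - 1) ^ j) := by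
    have e1 : ∑ j ∈ range (k + 1), (k.choose j : ℝ) *
          PowerSeries.coeff n ((degExp lam 1 - 1) ^ j)
        = ∑ j ∈ range (n + k + 1), (k.choose j : ℝ) *
          PowerSeries.coeff n ((degExp lam 1 - 1) ^ j) := by
      apply Finset.sum_subset
      · intro j hj
        exact Finset.mem_range.mpr (lt_of_lt_of_le (Finset.mem_range.mp hj) (by omega))
      · intro j _ hj
        have : k < j := by
          simpa using fun h => hj (Finset.mem_range.mpr (Nat.lt_succ_of_le h))
        rw [Nat.choose_eq_zero_of_lt this]
        simp
    have e2 : ∑ j ∈ range (n + 1), (k.choose j : ℝ) *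
          PowerSeries.coeff n ((degExp lam 1 - 1) ^ j)
        = ∑ j ∈ range (n + k + 1), (k.choose j : ℝ) *
          PowerSeries.coeff n ((degExp lam 1 - 1) ^ j) := by
      apply Finset.sum_subset
      · intro j hj
        exact Finset.mem_range.mpr (lt_of_lt_of_le (Finset.mem_range.mp hj) (by omega))
      · intro j _ hj
        have : n < j := by
          simpa using fun h => hj (Finset.mem_range.mpr (Nat.lt_succ_of_le h))
        rw [coeff_sub_one_pow_eq_zero lam this, mul_zero]
    rw [e1, e2]
  rw [← h2, ← h1]
  field_simp

lemma choose_le_two_pow' (k j : ℕ) : k.choose j ≤ 2 ^ k := by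
  rcases le_or_gt j k with h | h
  · calc k.choose j ≤ ∑ m ∈ range (k + 1), k.choose m :=
          Finset.single_le_sum (fun i _ => Nat.zero_le _)
            (Finset.mem_range.mpr (Nat.lt_succ_of_le h))
    _ = 2 ^ k := Nat.sum_range_choose k
  · rw [Nat.choose_eq_zero_of_lt h]; exact Nat.zero_le _

lemma summable_b (x : ℝ) (j : ℕ) :
    Summable fun k : ℕ => (k.choose j : ℝ) * x ^ k / k.factorial := by
  apply Summable.of_norm_bounded (Real.summable_pow_div_factorial (2 * |x|))
  intro k
  have h1 : ‖(k.choose j : ℝ) * x ^ k / k.factorial‖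
      = (k.choose j : ℝ) * |x| ^ k / k.factorial := by
    rw [Real.norm_eq_abs, abs_div, abs_mul, abs_pow, Nat.abs_cast, Nat.abs_cast]
  rw [h1, mul_pow]
  gcongr
  exact_mod_cast choose_le_two_pow' k j

lemma tsum_b (x : ℝ) (j : ℕ) :
    ∑' k : ℕ, (k.choose j : ℝ) * x ^ k / k.factorial
      = x ^ j / j.factorial * Real.exp x := by
  have hs := summable_b x j
  rw [← Summable.sum_add_tsum_nat_add j hs]
  have h0 : ∑ i ∈ range j, (i.choose j : ℝ) * x ^ i / i.factorial = 0 := by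
    apply Finset.sum_eq_zero
    intro i hi
    rw [Nat.choose_eq_zero_of_lt (Finset.mem_range.mp hi)]
    simp
  have key : ∀ i : ℕ, ((i + j).choose j : ℝ) * x ^ (i + j) / (i + j).factorial
      = (x ^ j / j.factorial) * (x ^ i / i.factorial) := by
    intro i
    have hfact : (((i + j).choose j : ℕ) : ℝ) * (i.factorial : ℝ) * (j.factorial : ℝ)
        = ((i + j).factorial : ℝ) := by
      exact_mod_cast Nat.add_choose_mul_factorial_mul_factorial i j
    have h1 : ((i + j).factorial : ℝ) ≠ 0 := Nat.cast_ne_zero.mpr (i + j).factorial_ne_zero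
    have h2 : (i.factorial : ℝ) ≠ 0 := Nat.cast_ne_zero.mpr i.factorial_ne_zero
    have h3 : (j.factorial : ℝ) ≠ 0 := Nat.cast_ne_zero.mpr j.factorial_ne_zero
    rw [pow_add]
    field_simp
    linear_combination (x ^ j * x ^ i) * hfact
  rw [h0, zero_add]
  have : (fun i : ℕ => ((i + j).choose j : ℝ) * x ^ (i + j) / (i + j).factorial)
      = fun i : ℕ => (x ^ j / j.factorial) * (x ^ i / i.factorial) := funext key
  rw [this, tsum_mul_left]
  congr 1
  rw [Real.exp_eq_exp_ℝ, NormedSpace.exp_eq_tsum_div]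

lemma degBell_eq_sum (lam x : ℝ) (n : ℕ) :
    degBell lam x n = (n.factorial : ℝ) * ∑ j ∈ range (n + 1),
      x ^ j * PowerSeries.coeff n ((degExp lam 1 - 1) ^ j) / j.factorial := by
  unfold degBell expComp
  rw [PowerSeries.coeff_mk]
  congr 1
  have hterm : ∀ k : ℕ, PowerSeries.coeff n ((x • (degExp lam 1 - 1)) ^ k) / k.factorial
      = x ^ k * PowerSeries.coeff n ((degExp lam 1 - 1) ^ k) / k.factorial := by
    intro k
    rw [smul_pow, map_smul, smul_eq_mul]
  rw [tsum_congr hterm]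
  apply tsum_eq_sum
  intro k hk
  rw [coeff_sub_one_pow_eq_zero lam (by simpa using hk)]
  simp

theorem degBell_dobinski (lam : ℝ) (n : ℕ) (x : ℝ) :
    (Summable fun k : ℕ => |(1 / (k.factorial : ℝ)) * degFall (k : ℝ) lam n * x ^ k|) ∧
    degBell lam x n =
      Real.exp (-x) * ∑' k : ℕ, (1 / (k.factorial : ℝ)) * degFall (k : ℝ) lam n * x ^ k := by
  set c : ℕ → ℝ := fun j => PowerSeries.coeff n ((degExp lam 1 - 1) ^ j) with hc
  have haeq : (fun k : ℕ => (1 / (k.factorial : ℝ)) * degFall (k : ℝ) lam n * x ^ k)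
      = fun k : ℕ => ∑ j ∈ range (n + 1),
          ((n.factorial : ℝ) * c j) * ((k.choose j : ℝ) * x ^ k / k.factorial) := by
    funext k
    rw [degFall_nat_eq lam n k]
    simp only [Finset.mul_sum, Finset.sum_mul]
    apply Finset.sum_congr rfl
    intro j _
    ring
  have hsummable : Summable (fun k : ℕ =>
      (1 / (k.factorial : ℝ)) * degFall (k : ℝ) lam n * x ^ k) := by
    rw [haeq]
    exact summable_sum fun j _ => (summable_b x j).mul_left _
  constructor
  · exact summable_abs_iff.mpr hsummable
  · have htsum : ∑' k : ℕ, (1 / (k.factorial : ℝ)) * degFall (k : ℝ) lam n * x ^ k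
        = ∑ j ∈ range (n + 1), ((n.factorial : ℝ) * c j) * (x ^ j / j.factorial * Real.exp x) := by
      rw [haeq, Summable.tsum_finsetSum fun j _ => (summable_b x j).mul_left _]
      apply Finset.sum_congr rfl
      intro j _
      rw [tsum_mul_left, tsum_b]
    rw [htsum, degBell_eq_sum]
    have : ∑ j ∈ range (n + 1), ((n.factorial : ℝ) * c j) * (x ^ j / j.factorial * Real.exp x)
        = Real.exp x * ((n.factorial : ℝ) * ∑ j ∈ range (n + 1), x ^ j * c j / j.factorial) := by
      rw [Finset.mul_sum, Finset.mul_sum]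
      apply Finset.sum_congr rfl
      intro j _
      ring
    rw [this, ← mul_assoc, ← Real.exp_add, neg_add_cancel, Real.exp_zero, one_mul]
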